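/- arXiv:0810.2834 — 2 statements merged into one kernel-verified Lean document; each statement's English description precedes it below -/
import Mathlib

section
/- Let q be a prime power with q > 2 and let a be a nonzero element of F_q. The polynomial f_a(x) := -a^2 * (((x - a)^(q-2) + a^(-1))^(q-2) - a)^(q-2) induces on F_q the transposition (0 a), i.e., the evaluation map of f_a sends 0 to a, sends a to 0, and fixes every other element of F_q. -/
lemma pow_card_sub_two_eq_inv (F : Type*) [Field F] [Fintype F]
    (hF : 2 < Fintype.card F) (x : F) : x ^ (Fintype.card F - 2) = x⁻¹ := by
  rcases eq_or_ne x 0 with rfl | hx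
  · rw [inv_zero, zero_pow]; omega
  · have h1 : x ^ (Fintype.card F - 1) = 1 := FiniteField.pow_card_sub_one_eq_one x hx
    have : x ^ (Fintype.card F - 1) = x ^ (Fintype.card F - 2) * x := by
      rw [← pow_succ]; congr 1; omega
    rw [this] at h1
    exact eq_inv_of_mul_eq_one_left h1

/-- **Carlitz's transposition polynomial.** For a finite field `F` with `q > 2`
elements and a nonzero `a ∈ F`, the polynomial
`f_a(x) = -a^2 * (((x - a)^(q-2) + a⁻¹)^(q-2) - a)^(q-2)` induces the
transposition `(0 a)` on `F`: it sends `0` to `a`, `a` to `0`, and fixes every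
other element. -/
theorem carlitz_transposition (F : Type*) [Field F] [Fintype F]
    (hF : 2 < Fintype.card F) (a : F) (ha : a ≠ 0)
    (f : F → F)
    (hf : ∀ x : F, f x =
      -a ^ 2 * (((x - a) ^ (Fintype.card F - 2) + a⁻¹) ^ (Fintype.card F - 2)
        - a) ^ (Fintype.card F - 2)) :
    f 0 = a ∧ f a = 0 ∧ ∀ x : F, x ≠ 0 → x ≠ a → f x = x := by
  have key : ∀ y : F, y ^ (Fintype.card F - 2) = y⁻¹ :=
    pow_card_sub_two_eq_inv F hF
  refine ⟨?_, ?_, ?_⟩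
  · rw [hf 0, key, key, key]
    field_simp
    ring
  · rw [hf a, key, key, key]
    simp
  · intro x hx hxa
    rw [hf x, key, key, key]
    have hxa' : x - a ≠ 0 := sub_ne_zero.mpr hxa
    have h1 : (x - a)⁻¹ + a⁻¹ = x / ((x - a) * a) := by field_simp; ring
    rw [h1, inv_div]
    have h3 : (x - a) * a / x - a = -a ^ 2 / x := by field_simp; ring
    rw [h3]
    field_simp
end

section
/- Let q be a prime power with q > 2. For every permutation σ of F_q there exists an exceptional polynomial f over F_q inducing σ: that is, there is a polynomial f ∈ F_q[x] such that f(x) = σ(x) for all x ∈ F_q, and such that f induces a permutation of F_{q^k} for infinitely many positive integers k. -/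
open Polynomial Function Equiv

section NT

/-- Number theory: the set of `k` with `q^k - 1` coprime to `q - 2` is infinite. -/
lemma carlitz_S_infinite {q : ℕ} (hq : 2 < q) :
    {k : ℕ | 0 < k ∧ Nat.Coprime (q - 2) (q ^ k - 1)}.Infinite := by
  set m := ordCompl[2] (q - 2) with hm
  have hmpos : 0 < m := Nat.ordCompl_pos 2 (by omega)
  have hφ : 0 < Nat.totient m := Nat.totient_pos.2 hmpos
  apply Set.infinite_of_injective_forall_mem
    (f := fun t : ℕ => 1 + t * Nat.totient m)
  · intro a b hab
    simp only at hab
    exact Nat.eq_of_mul_eq_mul_right hφ (by omega)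
  · intro t
    refine ⟨by omega, ?_⟩
    rw [Nat.Coprime]
    by_contra hg
    obtain ⟨p, hp, hpd⟩ := Nat.exists_prime_and_dvd hg
    have hpn : p ∣ q - 2 := hpd.trans (Nat.gcd_dvd_left _ _)
    have hpk : p ∣ q ^ (1 + t * Nat.totient m) - 1 :=
      hpd.trans (Nat.gcd_dvd_right _ _)
    have hq2 : (q : ZMod p) = 2 := by
      have h0 : ((q - 2 : ℕ) : ZMod p) = 0 :=
        (ZMod.natCast_eq_zero_iff _ _).2 hpn
      rw [Nat.cast_sub (by omega : 2 ≤ q)] at h0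
      push_cast at h0
      exact sub_eq_zero.mp h0
    have hqk : (q : ZMod p) ^ (1 + t * Nat.totient m) = 1 := by
      have h1 : 1 ≤ q ^ (1 + t * Nat.totient m) := Nat.one_le_pow _ _ (by omega)
      have h0 : ((q ^ (1 + t * Nat.totient m) - 1 : ℕ) : ZMod p) = 0 :=
        (ZMod.natCast_eq_zero_iff _ _).2 hpk
      rw [Nat.cast_sub h1] at h0
      push_cast at h0
      exact sub_eq_zero.mp h0
    rw [hq2] at hqk
    by_cases hp2 : p = 2
    · subst hp2
      rw [show (2 : ZMod 2) = 0 by decide, zero_pow (by omega)] at hqk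
      exact zero_ne_one hqk
    · have hpm : p ∣ m := by
        rw [← Nat.ordProj_mul_ordCompl_eq_self (q - 2) 2] at hpn
        rcases (Nat.Prime.dvd_mul hp).mp hpn with h | h
        · exact absurd ((Nat.prime_dvd_prime_iff_eq hp Nat.prime_two).mp
            (hp.dvd_of_dvd_pow h)) hp2
        · exact h
      have heuler : (2 : ZMod p) ^ Nat.totient m = 1 := by
        have h := (Nat.ModEq.pow_totient
          (Nat.coprime_ordCompl Nat.prime_two (by omega : q - 2 ≠ 0))).symm
        have hdvd : m ∣ 2 ^ Nat.totient m - 1 :=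
          (Nat.modEq_iff_dvd' Nat.one_le_two_pow).mp h
        have h0 : ((2 ^ Nat.totient m - 1 : ℕ) : ZMod p) = 0 :=
          (ZMod.natCast_eq_zero_iff _ _).2 (hpm.trans hdvd)
        rw [Nat.cast_sub Nat.one_le_two_pow] at h0
        push_cast at h0
        exact sub_eq_zero.mp h0
      rw [pow_add, pow_one, mul_comm t, pow_mul, heuler, one_pow, mul_one] at hqk
      have h1 : ((1 : ℕ) : ZMod p) = 0 := by
        have : (2 : ZMod p) - 1 = 0 := by rw [hqk]; ring
        push_cast
        rw [show (1 : ZMod p) = 2 - 1 by ring, this]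
      rw [ZMod.natCast_eq_zero_iff] at h1
      exact hp.one_lt.ne' (Nat.dvd_one.mp h1)

/-- The `n`-th power map on a finite field is bijective when `n` is coprime
to `q - 1`. -/
lemma pow_bijective_of_coprime {K : Type*} [Field K] [Finite K] {n : ℕ}
    (hn : 0 < n) (h : Nat.Coprime n (Nat.card K - 1)) :
    Function.Bijective (fun x : K => x ^ n) := by
  rw [Finite.injective_iff_bijective.symm]
  have h' : (Nat.card Kˣ).Coprime n := by
    rw [Nat.card_units]; exact h.symm
  have hu : Function.Injective (fun u : Kˣ => u ^ n) := by
    intro a b hab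
    exact (powCoprime h').injective
      (by rw [powCoprime_apply, powCoprime_apply]; exact hab)
  intro x y hxy
  simp only at hxy
  rcases eq_or_ne x 0 with rfl | hx
  · symm
    by_contra hy
    exact (pow_ne_zero n hy) (by rw [← hxy, zero_pow hn.ne'])
  · rcases eq_or_ne y 0 with rfl | hy
    · exact absurd (by rw [hxy, zero_pow hn.ne'] : x ^ n = 0) (pow_ne_zero n hx)
    · have h := hu (show (fun u : Kˣ => u ^ n) (Units.mk0 x hx)
          = (fun u : Kˣ => u ^ n) (Units.mk0 y hy) from
        Units.ext (by simpa using hxy))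
      simpa [Units.ext_iff] using h

end NT

section Carlitz

variable {F : Type*} [Field F] [Fintype F]

/-- A permutation is *nice* if it is induced by a polynomial that permutes
every finite extension field whose degree `k` satisfies the coprimality
condition. -/
def IsNice (F : Type*) [Field F] [Fintype F] (σ : Equiv.Perm F) : Prop :=
  ∃ f : Polynomial F, (∀ x : F, f.eval x = σ x) ∧
    ∀ k : ℕ, Nat.Coprime (Fintype.card F - 2) (Fintype.card F ^ k - 1) →
      ∀ (K : Type) [Field K] [Fintype K] [Algebra F K],
        Fintype.card K = Fintype.card F ^ k →
          Function.Bijective (fun x : K => Polynomial.aeval x f)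

lemma isNice_one : IsNice F 1 := by
  refine ⟨X, by simp, ?_⟩
  intro k hk K _ _ _ hK
  simpa using Function.bijective_id

lemma isNice_mul {σ τ : Equiv.Perm F} (hσ : IsNice F σ) (hτ : IsNice F τ) :
    IsNice F (σ * τ) := by
  obtain ⟨f, hf, hfb⟩ := hσ
  obtain ⟨g, hg, hgb⟩ := hτ
  refine ⟨f.comp g, ?_, ?_⟩
  · intro x
    rw [eval_comp, hg, hf]
    rfl
  · intro k hk K _ _ _ hK
    have : (fun x : K => aeval x (f.comp g))
        = (fun x : K => aeval x f) ∘ (fun x : K => aeval x g) := by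
      funext x
      simp [aeval_comp]
    rw [this]
    exact (hfb k hk K hK).comp (hgb k hk K hK)

lemma isNice_pow {σ : Equiv.Perm F} (hσ : IsNice F σ) (n : ℕ) :
    IsNice F (σ ^ n) := by
  induction n with
  | zero => simpa using isNice_one
  | succ n ih => rw [pow_succ]; exact isNice_mul ih hσ

lemma isNice_inv {σ : Equiv.Perm F} (hσ : IsNice F σ) : IsNice F σ⁻¹ := by
  have hpos : 0 < orderOf σ := orderOf_pos σ
  have h : σ⁻¹ = σ ^ (orderOf σ - 1) := by
    apply inv_eq_of_mul_eq_one_right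
    rw [← pow_succ', show orderOf σ - 1 + 1 = orderOf σ by omega]
    exact pow_orderOf_eq_one σ
  rw [h]
  exact isNice_pow hσ _

/-- The affine permutation `x ↦ a * x + b`. -/
def affinePerm (a b : F) (ha : a ≠ 0) : Equiv.Perm F :=
  (Equiv.mulLeft₀ a ha).trans (Equiv.addRight b)

@[simp] lemma affinePerm_apply (a b : F) (ha : a ≠ 0) (x : F) :
    affinePerm a b ha x = a * x + b := rfl

lemma isNice_affine (a b : F) (ha : a ≠ 0) : IsNice F (affinePerm a b ha) := by
  refine ⟨C a * X + C b, by simp, ?_⟩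
  intro k hk K _ _ _ hK
  have ha' : algebraMap F K a ≠ 0 := fun h => ha ((algebraMap F K).injective
    (by rw [h, map_zero]))
  have hfun : ∀ x : K, aeval (R := F) x (C a * X + C b) = algebraMap F K a * x + algebraMap F K b := by
    intro x; simp
  have hb : Function.Bijective
      (fun x : K => algebraMap F K a * x + algebraMap F K b) :=
    ((Equiv.addRight (algebraMap F K b)).bijective).comp (mulLeft_bijective₀ _ ha')
  simpa [hfun, Function.comp_def] using hb

/-- The inversion permutation `x ↦ x⁻¹` (with `0 ↦ 0`). -/
def invPerm (F : Type*) [Field F] : Equiv.Perm F :=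
  Function.Involutive.toPerm _ (fun x : F => inv_inv x)

@[simp] lemma invPerm_apply (x : F) : invPerm F x = x⁻¹ := rfl

lemma pow_card_sub_two (hF : 2 < Fintype.card F) (x : F) :
    x ^ (Fintype.card F - 2) = x⁻¹ := by
  rcases eq_or_ne x 0 with rfl | hx
  · rw [zero_pow (by omega), inv_zero]
  · have h1 : x ^ (Fintype.card F - 2) * x = 1 := by
      rw [← pow_succ, show Fintype.card F - 2 + 1 = Fintype.card F - 1 by omega]
      exact FiniteField.pow_card_sub_one_eq_one x hx
    exact eq_inv_of_mul_eq_one_left h1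

lemma isNice_invPerm (hF : 2 < Fintype.card F) : IsNice F (invPerm F) := by
  refine ⟨X ^ (Fintype.card F - 2), ?_, ?_⟩
  · intro x
    rw [eval_pow, eval_X, pow_card_sub_two hF, invPerm_apply]
  · intro k hk K _ _ _ hK
    have : (fun x : K => aeval (R := F) x (X ^ (Fintype.card F - 2)))
        = fun x : K => x ^ (Fintype.card F - 2) := by
      funext x; simp
    rw [this]
    apply pow_bijective_of_coprime (by omega)
    rw [Nat.card_eq_fintype_card, hK]
    exact hk

lemma swap_zero_one_eq (hF : 2 < Fintype.card F) [DecidableEq F] :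
    Equiv.swap (0 : F) 1 =
      affinePerm (-1) 1 (neg_ne_zero.mpr one_ne_zero) * invPerm F *
      affinePerm 1 1 one_ne_zero * invPerm F *
      affinePerm 1 (-1) one_ne_zero * invPerm F := by
  apply Equiv.ext
  intro x
  simp only [Equiv.Perm.mul_apply, affinePerm_apply, invPerm_apply, one_mul, neg_mul]
  rcases eq_or_ne x 0 with rfl | hx
  · rw [Equiv.swap_apply_left]
    norm_num
  rcases eq_or_ne x 1 with rfl | hx1
  · rw [Equiv.swap_apply_right]
    norm_num
  · rw [Equiv.swap_apply_of_ne_of_ne hx hx1]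
    have h1x : 1 - x ≠ 0 := sub_ne_zero.mpr (fun h => hx1 h.symm)
    have hu : x⁻¹ + -1 = (1 - x) / x := by
      field_simp
      ring
    have hu' : (x⁻¹ + -1)⁻¹ + 1 = 1 / (1 - x) := by
      rw [hu, inv_div]
      field_simp
      ring
    rw [hu', one_div, inv_inv]
    ring

lemma isNice_swap (hF : 2 < Fintype.card F) [DecidableEq F] {a b : F} (hab : a ≠ b) :
    IsNice F (Equiv.swap a b) := by
  have hba : b - a ≠ 0 := sub_ne_zero.mpr (Ne.symm hab)
  have key : Equiv.swap a b =
      affinePerm (b - a) a hba * Equiv.swap (0 : F) 1 * (affinePerm (b - a) a hba)⁻¹ := by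
    have h0 : affinePerm (b - a) a hba 0 = a := by simp
    have h1 : affinePerm (b - a) a hba 1 = b := by simp
    have key' := Equiv.swap_apply_apply (affinePerm (b - a) a hba) (0 : F) 1
    rw [h0, h1] at key'
    exact key'
  rw [key, swap_zero_one_eq hF]
  have hA := isNice_affine (b - a) a hba
  exact isNice_mul (isNice_mul hA (by
    exact isNice_mul (isNice_mul (isNice_mul (isNice_mul (isNice_mul
      (isNice_affine _ _ _) (isNice_invPerm hF)) (isNice_affine _ _ _))
      (isNice_invPerm hF)) (isNice_affine _ _ _)) (isNice_invPerm hF)))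
    (isNice_inv hA)

end Carlitz

/-- Let `F` be a finite field with `q > 2` elements. Every permutation `σ` of
`F` is induced by an exceptional polynomial over `F`: there is a polynomial
`f ∈ F[x]` with `f(x) = σ(x)` for all `x ∈ F`, such that `f` induces a
permutation of the degree-`k` extension field with `q^k` elements for
infinitely many positive integers `k`. -/
theorem exists_exceptional_polynomial_inducing_perm (F : Type*) [Field F]
    [Fintype F] (hF : 2 < Fintype.card F) (σ : Equiv.Perm F) :
    ∃ f : Polynomial F,
      (∀ x : F, f.eval x = σ x) ∧
      {k : ℕ | 0 < k ∧
        ∀ (K : Type) [Field K] [Fintype K] [Algebra F K],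
          Fintype.card K = Fintype.card F ^ k →
            Function.Bijective (fun x : K => Polynomial.aeval x f)}.Infinite := by
  classical
  have hσ : σ ∈ Subgroup.closure {τ : Equiv.Perm F | τ.IsSwap} := by
    rw [Equiv.Perm.closure_isSwap]; trivial
  have hnice : IsNice F σ := by
    refine Subgroup.closure_induction (p := fun τ _ => IsNice F τ)
      ?_ isNice_one (fun _ _ _ _ h1 h2 => isNice_mul h1 h2)
      (fun _ _ h => isNice_inv h) hσ
    rintro τ ⟨a, b, hab, rfl⟩
    exact isNice_swap hF hab
  obtain ⟨f, hf, hfb⟩ := hnice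
  refine ⟨f, hf, ?_⟩
  apply Set.Infinite.mono _ (carlitz_S_infinite hF)
  rintro k ⟨hk0, hkc⟩
  exact ⟨hk0, fun K _ _ _ hK => hfb k hkc K hK⟩
end
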